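/- For all real z ≥ 1, γ ≥ 2, and 0 < c < 1/γ, one has z^γ/γ - 1/γ - (z-1) ≥ c(z-1)^2 z^{γ-2}. -/

import Mathlib

theorem stmt1 (z γ c : ℝ) (hz : 1 ≤ z) (hγ : 2 ≤ γ) (hc : 0 < c) (hcγ : c < 1 / γ) :
    z ^ γ / γ - 1 / γ - (z - 1) ≥ c * (z - 1) ^ 2 * z ^ (γ - 2) := by
  have hγ0 : (0:ℝ) < γ := by linarith
  set F : ℝ → ℝ := fun x => x ^ γ / γ - 1 / γ - (x - 1) - c * (x - 1) ^ 2 * x ^ (γ - 2) with hF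
  have hderiv : ∀ x ∈ Set.Ioi (1:ℝ), HasDerivAt F
      (γ * x ^ (γ - 1) / γ - 1 - c * (2 * (x - 1) * x ^ (γ - 2)
        + (x - 1) ^ 2 * ((γ - 2) * x ^ (γ - 2 - 1)))) x := by
    intro x hx
    have hx0 : x ≠ 0 := by have : (1:ℝ) < x := hx; linarith
    have h1 : HasDerivAt (fun y : ℝ => y ^ γ) (γ * x ^ (γ - 1)) x := by
      simpa [mul_comm] using Real.hasDerivAt_rpow_const (p := γ) (Or.inl hx0)
    have h2 : HasDerivAt (fun y : ℝ => y ^ (γ - 2)) ((γ - 2) * x ^ (γ - 2 - 1)) x := by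
      simpa [mul_comm] using Real.hasDerivAt_rpow_const (p := γ - 2) (Or.inl hx0)
    have h4 : HasDerivAt (fun y : ℝ => (y - 1) ^ 2) (2 * (x - 1)) x := by
      have := ((hasDerivAt_id x).sub_const 1).pow 2
      exact (by simpa using this : HasDerivAt ((fun y : ℝ => y - 1) ^ 2) (2 * (x - 1)) x)
    have h3 := (h4.mul h2).const_mul c
    have := ((((h1.div_const γ).sub_const (1/γ)).sub ((hasDerivAt_id x).sub_const 1)).sub h3)
    exact this.congr_of_eventuallyEq (Filter.Eventually.of_forall fun y => by simp [hF, mul_assoc])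
  have hmono : MonotoneOn F (Set.Ici 1) := by
    apply monotoneOn_of_deriv_nonneg (convex_Ici 1)
    · apply ContinuousOn.sub
      apply ContinuousOn.sub
      apply ContinuousOn.sub
      · exact (continuousOn_id.rpow_const fun x hx => Or.inl (by
          have : (1:ℝ) ≤ x := hx; positivity)).div_const γ
      · exact continuousOn_const
      · exact (continuousOn_id.sub continuousOn_const)
      · exact ((continuousOn_const.mul ((continuousOn_id.sub continuousOn_const).pow 2)).mul
          (continuousOn_id.rpow_const fun x hx => Or.inl (by
            have : (1:ℝ) ≤ x := hx; positivity)))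
    · intro x hx
      rw [interior_Ici] at hx
      exact (hderiv x hx).differentiableAt.differentiableWithinAt
    · intro x hx
      rw [interior_Ici] at hx
      rw [(hderiv x hx).deriv]
      have hx1 : (1:ℝ) < x := hx
      have hx0 : (0:ℝ) < x := by linarith
      -- rewrite rpow in terms of u = x ^ (γ - 3)
      set u : ℝ := x ^ (γ - 2 - 1) with hu
      have hu0 : 0 < u := Real.rpow_pos_of_pos hx0 _
      have e1 : x ^ (γ - 2) = u * x := by
        rw [hu, ← Real.rpow_add_one hx0.ne']
        congr 1; ring
      have e2 : x ^ (γ - 1) = u * x * x := by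
        rw [hu, ← Real.rpow_add_one hx0.ne', ← Real.rpow_add_one hx0.ne']
        congr 1; ring
      have h5 : (1:ℝ) ≤ u * x := by
        rw [← e1]
        exact Real.one_le_rpow hx1.le (by linarith)
      have hcγ' : c * γ < 1 := by
        rw [lt_div_iff₀ hγ0] at hcγ; linarith
      rw [e1, e2]
      have ecan : γ * (u * x * x) / γ = u * x * x := by field_simp
      rw [ecan]
      nlinarith [mul_pos hu0 (mul_pos hx0 hx0), mul_nonneg (mul_nonneg hc.le hu0.le) (sub_nonneg.2 hx1.le),
        mul_nonneg (mul_nonneg (mul_nonneg hc.le hu0.le) (sub_nonneg.2 hx1.le)) (sub_nonneg.2 hx1.le),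
        mul_nonneg (sub_nonneg.2 hcγ'.le) (mul_nonneg (mul_nonneg hu0.le (sub_nonneg.2 hx1.le)) hx0.le),
        mul_nonneg (mul_nonneg hc.le (sub_nonneg.2 hx1.le)) (sub_nonneg.2 h5)]
  have h1 : F 1 ≤ F z := hmono (by simp) hz hz
  have hF1 : F 1 = 0 := by simp [hF]
  rw [hF1] at h1
  simp only [hF] at h1
  linarith
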